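/- Let h_0 > 0 and r_0 = (4/27) h_0^{3/2}. The function τ_0 defined on (−∞, r_0) by τ_0(r) = (1/3)(√h_0 + C(r) + h_0/C(r)) with C(r) = (3/2)(−4r + 2r_0 + 4√(r(r−r_0)))^{1/3} (taking the branch with τ_0(0) = √h_0) satisfies τ_0(r)³ − √(h_0) τ_0(r)² + r = 0 for all r < r_0, and τ_0(0) = √h_0. -/

import Mathlib

noncomputable section

/-- The Cardano auxiliary quantity
`C(r) = (3/2) (−4r + 2r₀ + 4 √(r(r−r₀)))^{1/3}`, with `r₀ = (4/27) h₀^{3/2}`,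
computed with the principal complex square and cube roots. -/
def Cardano (h0 r : ℝ) : ℂ :=
  (3 / 2) *
    ((((-4 * r + 2 * ((4 / 27) * Real.sqrt h0 ^ 3) : ℝ) : ℂ) +
        4 * (((r * (r - (4 / 27) * Real.sqrt h0 ^ 3) : ℝ) : ℂ)) ^ ((1 : ℂ) / 2)) ^
      ((1 : ℂ) / 3))

/-- `τ₀(r) = (1/3)(√h₀ + C(r) + h₀/C(r))`. -/
def tau0 (h0 r : ℝ) : ℂ :=
  (1 / 3) * ((Real.sqrt h0 : ℂ) + Cardano h0 r + (h0 : ℂ) / Cardano h0 r)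

/-- For all `r < r₀ = (4/27) h₀^{3/2}`, the branch `τ₀(r)` is a (real) root of the cubic
`τ³ − √h₀ τ² + r = 0`, and `τ₀(0) = √h₀`. -/
lemma cpow_half_sq (z : ℂ) : (z ^ ((1:ℂ)/2)) ^ 2 = z := by
  rcases eq_or_ne z 0 with rfl | hz
  · rw [Complex.zero_cpow (by norm_num : ((1:ℂ)/2) ≠ 0)]; norm_num
  · rw [sq, ← Complex.cpow_add _ _ hz]; norm_num

lemma cpow_third_cube (z : ℂ) (hz : z ≠ 0) : (z ^ ((1:ℂ)/3)) ^ 3 = z := by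
  have h : (z ^ ((1:ℂ)/3)) ^ 3 = z ^ ((1:ℂ)/3) * z ^ ((1:ℂ)/3) * z ^ ((1:ℂ)/3) := by ring
  rw [h, ← Complex.cpow_add _ _ hz, ← Complex.cpow_add _ _ hz]
  norm_num

lemma real_cpow_third (x : ℝ) (hx : 0 ≤ x) :
    ((x:ℂ)) ^ ((1:ℂ)/3) = ((x ^ ((1:ℝ)/3) : ℝ) : ℂ) := by
  rw [show ((1:ℂ)/3) = (((1:ℝ)/3 : ℝ) : ℂ) by norm_num, ← Complex.ofReal_cpow hx]

lemma real_cpow_half (x : ℝ) (hx : 0 ≤ x) :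
    ((x:ℂ)) ^ ((1:ℂ)/2) = ((x ^ ((1:ℝ)/2) : ℝ) : ℂ) := by
  rw [show ((1:ℂ)/2) = (((1:ℝ)/2 : ℝ) : ℂ) by norm_num, ← Complex.ofReal_cpow hx]

lemma rpow_third_of_cube (x : ℝ) (hx : 0 ≤ x) : (x^3) ^ ((1:ℝ)/3) = x := by
  rw [← Real.rpow_natCast x 3, ← Real.rpow_mul hx]
  norm_num

lemma real_cpow_half_neg (x : ℝ) (hx : x < 0) :
    ((x:ℂ)) ^ ((1:ℂ)/2) = Complex.I * (Real.sqrt (-x) : ℂ) := by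
  rw [Complex.ofReal_cpow_of_nonpos hx.le]
  have h1 : (-(x:ℂ)) ^ ((1:ℂ)/2) = ((Real.sqrt (-x) : ℝ) : ℂ) := by
    rw [show (-(x:ℂ)) = (((-x : ℝ)) : ℂ) by push_cast; ring,
      show ((1:ℂ)/2) = (((1:ℝ)/2 : ℝ) : ℂ) by norm_num,
      ← Complex.ofReal_cpow (by linarith), ← Real.sqrt_eq_rpow]
  have h2 : Complex.exp (↑Real.pi * Complex.I * ((1:ℂ)/2)) = Complex.I := by
    rw [show (↑Real.pi * Complex.I * ((1:ℂ)/2)) = (↑(Real.pi/2) : ℂ) * Complex.I by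
      push_cast; ring, Complex.exp_mul_I]
    simp
  rw [h1, h2]
  ring

theorem stmt_4 (h0 : ℝ) (hh0 : 0 < h0) :
    (∀ r : ℝ, r < (4 / 27) * Real.sqrt h0 ^ 3 →
      tau0 h0 r ^ 3 - (Real.sqrt h0 : ℂ) * tau0 h0 r ^ 2 + (r : ℂ) = 0 ∧
      (tau0 h0 r).im = 0) ∧
    tau0 h0 0 = (Real.sqrt h0 : ℂ) := by
  set a := Real.sqrt h0 with ha_def
  have ha : 0 < a := Real.sqrt_pos.mpr hh0
  have hsq : a ^ 2 = h0 := Real.sq_sqrt hh0.le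
  -- value at 0
  have hCard0 : Cardano h0 0 = (a : ℂ) := by
    have h1 : Cardano h0 0 = 3 / 2 *
        ((((-4 * (0:ℝ) + 2 * (4 / 27 * a ^ 3) : ℝ) : ℂ) +
          4 * ((((0:ℝ) * ((0:ℝ) - 4 / 27 * a ^ 3) : ℝ) : ℂ)) ^ ((1:ℂ)/2)) ^ ((1:ℂ)/3)) := rfl
    rw [h1]
    have h2 : ((((0:ℝ) * ((0:ℝ) - 4 / 27 * a ^ 3) : ℝ) : ℂ)) = 0 := by push_cast; ring
    rw [h2, Complex.zero_cpow (by norm_num : ((1:ℂ)/2) ≠ 0)]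
    have h3 : (((-4 * (0:ℝ) + 2 * (4 / 27 * a ^ 3) : ℝ) : ℂ) + 4 * 0) =
        (((8/27 * a^3 : ℝ)) : ℂ) := by push_cast; ring
    rw [h3]
    have h4 : (8/27 * a^3 : ℝ) = ((2/3)*a)^3 := by ring
    rw [h4, real_cpow_third _ (by positivity), rpow_third_of_cube _ (by positivity)]
    push_cast; ring
  have htau0 : tau0 h0 0 = (a : ℂ) := by
    rw [tau0, hCard0, ← hsq]
    have haC : (a : ℂ) ≠ 0 := by exact_mod_cast ha.ne'
    field_simp
    simp only [Real.sqrt_sq ha.le]; push_cast; ring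
  refine ⟨fun r hr => ?_, htau0⟩
  -- general r
  set z : ℝ := r * (r - 4 / 27 * a ^ 3) with hz_def
  set s : ℂ := ((z : ℝ) : ℂ) ^ ((1:ℂ)/2) with hs_def
  set D : ℂ := ((-4 * r + 2 * (4 / 27 * a ^ 3) : ℝ) : ℂ) + 4 * s with hD_def
  set C : ℂ := Cardano h0 r with hC_def
  have hCard : C = 3 / 2 * D ^ ((1:ℂ)/3) := rfl
  have hs2 : s ^ 2 = ((z : ℝ) : ℂ) := cpow_half_sq _
  have hs2' : s ^ 2 = (r : ℂ) * ((r : ℂ) - 4/27 * (a:ℂ)^3) := by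
    rw [hs2, hz_def]; push_cast; ring
  have hDc : D = -4*(r:ℂ) + 8/27*(a:ℂ)^3 + 4*s := by
    rw [hD_def]; push_cast; ring
  have hDD : D * (-4*(r:ℂ) + 8/27*(a:ℂ)^3 - 4*s) = 64/729 * (a:ℂ)^6 := by
    rw [hDc]
    linear_combination (-16 : ℂ) * hs2'
  have hD0 : D ≠ 0 := by
    intro h
    rw [h, zero_mul] at hDD
    have h6 : (a:ℂ)^6 ≠ 0 := pow_ne_zero 6 (by exact_mod_cast ha.ne' : (a:ℂ) ≠ 0)
    exact h6 (by linear_combination (-729/64 : ℂ) * hDD)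
  have hC3 : C ^ 3 = 27/8 * D := by
    rw [hCard, mul_pow, cpow_third_cube _ hD0]
    ring
  have hC3' : C ^ 3 = 27/8 * (-4*(r:ℂ) + 8/27*(a:ℂ)^3 + 4*s) := by
    rw [hC3, hDc]
  have hC0 : C ≠ 0 := by
    rw [hCard]
    intro h
    rcases mul_eq_zero.mp h with h' | h'
    · norm_num at h'
    · rw [Complex.cpow_eq_zero_iff] at h'
      exact hD0 h'.1
  have key6 : C^6 - (2*(a:ℂ)^3 - 27*(r:ℂ)) * C^3 + (a:ℂ)^6 = 0 := by
    linear_combination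
      (C^3 + 27/8 * (-4*(r:ℂ) + 8/27*(a:ℂ)^3 + 4*s) - (2*(a:ℂ)^3 - 27*(r:ℂ))) * hC3'
        + (729/4 : ℂ) * hs2'
  have hh0c : ((h0 : ℝ) : ℂ) = (a:ℂ)^2 := by
    rw [← hsq]; push_cast; ring
  constructor
  · -- root equation
    rw [tau0, ← hC_def, hh0c]
    field_simp
    rw [← ha_def]
    linear_combination key6
  · -- imaginary part
    rcases le_or_gt r 0 with hrle | hrpos
    · -- real case: z ≥ 0
      have hzpos : 0 ≤ z := by
        rw [hz_def]
        have : r - 4/27 * a^3 < 0 := by nlinarith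
        nlinarith
      have hsreal : s = ((z ^ ((1:ℝ)/2) : ℝ) : ℂ) := real_cpow_half _ hzpos
      set d : ℝ := -4 * r + 2 * (4 / 27 * a ^ 3) + 4 * z ^ ((1:ℝ)/2) with hd_def
      have hdnn : 0 ≤ d := by
        have h1 : 0 ≤ z ^ ((1:ℝ)/2) := Real.rpow_nonneg hzpos _
        have h2 : 0 < a ^ 3 := pow_pos ha 3
        rw [hd_def]
        nlinarith
      have hDreal : D = ((d : ℝ) : ℂ) := by rw [hD_def, hsreal, hd_def]; push_cast; ring
      have hCreal : C = (((3/2) * d ^ ((1:ℝ)/3) : ℝ) : ℂ) := by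
        rw [hCard, hDreal, real_cpow_third _ hdnn]; push_cast; ring
      have htr : tau0 h0 r =
          (((1/3) * (a + (3/2) * d ^ ((1:ℝ)/3) + h0 / ((3/2) * d ^ ((1:ℝ)/3))) : ℝ) : ℂ) := by
        rw [tau0, ← hC_def, hCreal]; push_cast; ring
      rw [htr, Complex.ofReal_im]
    · -- complex case: 0 < r < r0, z < 0
      have hzneg : z < 0 := by
        rw [hz_def]
        have h1 : r - 4/27 * a^3 < 0 := by nlinarith
        nlinarith
      have hsI : s = Complex.I * ((Real.sqrt (-z) : ℝ) : ℂ) := real_cpow_half_neg _ hzneg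
      have hDre : D.re = -4 * r + 2 * (4 / 27 * a ^ 3) := by
        rw [hD_def, hsI]
        simp only [Complex.add_re, Complex.ofReal_re, Complex.mul_re, Complex.mul_im,
          Complex.I_re, Complex.I_im, Complex.ofReal_im, Complex.re_ofNat, Complex.im_ofNat]
        ring
      have hDim : D.im = 4 * Real.sqrt (-z) := by
        rw [hD_def, hsI]
        simp only [Complex.add_im, Complex.ofReal_im, Complex.mul_re, Complex.mul_im,
          Complex.I_re, Complex.I_im, Complex.ofReal_re, Complex.re_ofNat, Complex.im_ofNat]
        ring
      have hnormD : Complex.normSq D = (2 * (4/27 * a^3))^2 := by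
        rw [Complex.normSq_apply, hDre, hDim]
        have hzz : Real.sqrt (-z) ^ 2 = -z := Real.sq_sqrt (by linarith)
        rw [hz_def] at hzz
        linear_combination (16:ℝ) * hzz
      have habsD : ‖D‖ = 2 * (4/27 * a^3) := by
        have h1 : ‖D‖ ^ 2 = (2 * (4/27 * a^3))^2 := by
          rw [Complex.sq_norm, hnormD]
        have h2 : 0 ≤ ‖D‖ := norm_nonneg D
        nlinarith
      have habsC : ‖C‖ = a := by
        rw [hCard]
        rw [norm_mul]
        rw [show ((1:ℂ)/3) = (((1:ℝ)/3 : ℝ) : ℂ) by norm_num]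
        rw [Complex.norm_cpow_real, habsD]
        have : (2 * (4/27 * a^3)) = ((2/3)*a)^3 := by ring
        rw [this, rpow_third_of_cube _ (by positivity)]
        simp
        ring
      have hconj : (starRingEnd ℂ) C = ((h0:ℝ):ℂ) / C := by
        rw [eq_div_iff hC0, mul_comm, Complex.mul_conj]
        rw [← Complex.sq_norm, habsC]
        exact_mod_cast hsq
      rw [tau0, ← hC_def, ← hconj]
      simp [Complex.add_im, Complex.conj_im]
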